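/- Let K be a bounded linear operator on H with Moore–Penrose pseudoinverse P, and let F = (f_1,…,f_N) be a Parseval K-frame for H. Set L = max_{1≤i≤N} ‖f_i‖·‖P f_i‖, Λ₁ = { i : ‖f_i‖·‖P f_i‖ = L }, Λ₂ = {1,…,N} \ Λ₁, V₁ = span{ f_i : i ∈ Λ₁ } and V₂ = span{ f_i : i ∈ Λ₂ }. If V₁ ∩ V₂ = {0}, then every K-dual G = (g_1,…,g_N) of F satisfies max_{1≤i≤N} ‖f_i‖·‖g_i‖ ≥ L. -/

import Mathlib

local notation "⟪" x ", " y "⟫" => @inner ℂ _ _ x y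

/-- Let `K` be a bounded operator on `H` with Moore–Penrose pseudoinverse `P`
and `F` a Parseval `K`-frame.  With `L = max_i ‖f_i‖·‖P f_i‖`, `Λ₁` the set of indices
attaining `L`, `Λ₂` its complement, `V₁ = span{f_i : i ∈ Λ₁}`, `V₂ = span{f_i : i ∈ Λ₂}`:
if `V₁ ∩ V₂ = {0}` then every `K`-dual `G` of `F` satisfies `max_i ‖f_i‖·‖g_i‖ ≥ L`.
(The paper's `⟨f, g⟩` is linear in the first slot, i.e. Mathlib's `⟪g, f⟫`.) -/
theorem stmt11
    {H : Type*} [NormedAddCommGroup H] [InnerProductSpace ℂ H] [FiniteDimensional ℂ H]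
    (hdim : 1 ≤ Module.finrank ℂ H)
    {N : ℕ} (hN : 1 ≤ N)
    (K P : H →L[ℂ] H)
    (hP1 : K ∘L P ∘L K = K) (hP2 : P ∘L K ∘L P = P)
    (hP3 : IsSelfAdjoint (K ∘L P)) (hP4 : IsSelfAdjoint (P ∘L K))
    (F : Fin N → H)
    (hParseval : ∀ f : H,
      ∑ i, ‖⟪F i, f⟫‖ ^ 2 = ‖ContinuousLinearMap.adjoint K f‖ ^ 2)
    (L : ℝ) (hL : L = ⨆ i, ‖F i‖ * ‖P (F i)‖)
    (hV : Submodule.span ℂ (F '' {i | ‖F i‖ * ‖P (F i)‖ = L}) ⊓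
          Submodule.span ℂ (F '' {i | ‖F i‖ * ‖P (F i)‖ ≠ L}) = ⊥)
    (G : Fin N → H)
    (hdual : ∀ f : H, K f = ∑ i, ⟪G i, f⟫ • F i) :
    L ≤ ⨆ i, ‖F i‖ * ‖G i‖ := by
  classical
  have : Nonempty (Fin N) := ⟨⟨0, hN⟩⟩
  set K' := ContinuousLinearMap.adjoint K with hK'
  set P' := ContinuousLinearMap.adjoint P with hP'
  -- Step 1: the frame operator is K K*
  have hS : ∀ x : H, ∑ i, ⟪F i, x⟫ • F i = K (K' x) := by
    let T : H →ₗ[ℂ] H :=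
      { toFun := fun x => (∑ i, ⟪F i, x⟫ • F i) - K (K' x)
        map_add' := fun x y => by
          simp only [inner_add_right, add_smul, Finset.sum_add_distrib, map_add]
          abel
        map_smul' := fun c x => by
          simp only [inner_smul_right, map_smul, RingHom.id_apply, smul_sub,
            Finset.smul_sum, smul_smul] }
    have hT : T = 0 := by
      rw [← inner_map_self_eq_zero]
      intro x
      have h1 : ⟪T x, x⟫ = (∑ i, (starRingEnd ℂ) ⟪F i, x⟫ * ⟪F i, x⟫) - ⟪K (K' x), x⟫ := by
        simp [T, inner_sub_left, sum_inner, inner_smul_left]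
        exact Finset.sum_congr rfl fun i _ => mul_comm _ _
      have h2 : ⟪K (K' x), x⟫ = ⟪K' x, K' x⟫ :=
        (ContinuousLinearMap.adjoint_inner_right K (K' x) x).symm
      have h3 : ∑ i, (starRingEnd ℂ) ⟪F i, x⟫ * ⟪F i, x⟫
          = ⟪K' x, K' x⟫ := by
        have := hParseval x
        calc ∑ i, (starRingEnd ℂ) ⟪F i, x⟫ * ⟪F i, x⟫
            = ∑ i, ((‖⟪F i, x⟫‖ ^ 2 : ℝ) : ℂ) := by
              refine Finset.sum_congr rfl fun i _ => ?_
              rw [Complex.conj_mul']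
              norm_cast
          _ = (((∑ i, ‖⟪F i, x⟫‖ ^ 2 : ℝ)) : ℂ) := by push_cast; ring
          _ = ((‖K' x‖ : ℂ)) ^ 2 := by rw [this]; push_cast; ring
          _ = ⟪K' x, K' x⟫ := by rw [inner_self_eq_norm_sq_to_K]; norm_cast
      rw [h1, h2, h3]
      exact sub_self _
    intro x
    have := LinearMap.congr_fun hT x
    simpa [T, sub_eq_zero] using this
  -- Step 2: canonical dual property
  have hC : ∀ f : H, ∑ i, ⟪P (F i), f⟫ • F i = K f := by
    intro f
    have h1 : ∀ i, ⟪P (F i), f⟫ = ⟪F i, P' f⟫ := fun i =>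
      (ContinuousLinearMap.adjoint_inner_right P (F i) f).symm
    have h2 : ∑ i, ⟪F i, P' f⟫ • F i = K (K' (P' f)) := hS (P' f)
    have h3 : K' (P' f) = P (K f) := by
      have h5 : (ContinuousLinearMap.adjoint (P ∘L K)) f = (P ∘L K) f := by
        rw [hP4.adjoint_eq]
      rw [ContinuousLinearMap.adjoint_comp] at h5
      simpa using h5
    have h6 : K (P (K f)) = K f := by
      have := ContinuousLinearMap.ext_iff.mp hP1 f
      simpa using this
    calc ∑ i, ⟪P (F i), f⟫ • F i = ∑ i, ⟪F i, P' f⟫ • F i := by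
          refine Finset.sum_congr rfl fun i _ => by rw [h1]
      _ = K (K' (P' f)) := h2
      _ = K (P (K f)) := by rw [h3]
      _ = K f := h6
  -- Step 3: the difference of duals annihilates
  have hzero : ∀ f : H, ∑ i, (⟪G i, f⟫ - ⟪P (F i), f⟫) • F i = 0 := by
    intro f
    simp only [sub_smul, Finset.sum_sub_distrib]
    rw [hC f, ← hdual f, sub_self]
  -- Step 4: restrict to Λ₁ using hV
  set p : Fin N → Prop := fun i => ‖F i‖ * ‖P (F i)‖ = L with hp
  set s : Finset (Fin N) := Finset.univ.filter p with hs
  have hsplit : ∀ f : H, ∑ i ∈ s, (⟪G i, f⟫ - ⟪P (F i), f⟫) • F i = 0 := by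
    intro f
    set v := ∑ i ∈ s, (⟪G i, f⟫ - ⟪P (F i), f⟫) • F i with hv
    set w := ∑ i ∈ Finset.univ.filter (fun i => ¬ p i),
        (⟪G i, f⟫ - ⟪P (F i), f⟫) • F i with hw
    have hvw : v + w = 0 := by
      rw [hv, hw, Finset.sum_filter_add_sum_filter_not]
      exact hzero f
    have hv1 : v ∈ Submodule.span ℂ (F '' {i | ‖F i‖ * ‖P (F i)‖ = L}) := by
      refine Submodule.sum_mem _ fun i hi => Submodule.smul_mem _ _ ?_
      exact Submodule.subset_span ⟨i, (Finset.mem_filter.mp hi).2, rfl⟩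
    have hv2 : v ∈ Submodule.span ℂ (F '' {i | ‖F i‖ * ‖P (F i)‖ ≠ L}) := by
      have hveq : v = -w := eq_neg_of_add_eq_zero_left hvw
      rw [hveq]
      refine Submodule.neg_mem _ (Submodule.sum_mem _ fun i hi => Submodule.smul_mem _ _ ?_)
      exact Submodule.subset_span ⟨i, (Finset.mem_filter.mp hi).2, rfl⟩
    have : v ∈ (⊥ : Submodule ℂ H) := hV ▸ Submodule.mem_inf.mpr ⟨hv1, hv2⟩
    simpa using this
  -- Step 6: trace identity on Λ₁
  have htr : ∑ i ∈ s, ⟪G i - P (F i), P (F i)⟫ = 0 := by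
    let b := stdOrthonormalBasis ℂ H
    calc ∑ i ∈ s, ⟪G i - P (F i), P (F i)⟫
        = ∑ i ∈ s, ∑ k, ⟪G i - P (F i), b k⟫ * ⟪b k, P (F i)⟫ := by
          refine Finset.sum_congr rfl fun i _ => (b.sum_inner_mul_inner _ _).symm
      _ = ∑ k, ∑ i ∈ s, ⟪G i - P (F i), b k⟫ * ⟪b k, P (F i)⟫ := Finset.sum_comm
      _ = ∑ k, ⟪b k, P (∑ i ∈ s, (⟪G i, b k⟫ - ⟪P (F i), b k⟫) • F i)⟫ := by
          refine Finset.sum_congr rfl fun k _ => ?_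
          rw [map_sum, inner_sum]
          refine Finset.sum_congr rfl fun i _ => ?_
          rw [map_smul, inner_smul_right, inner_sub_left]
      _ = 0 := by
          refine Finset.sum_eq_zero fun k _ => ?_
          rw [hsplit (b k)]
          simp
  -- Step 7: conclusion
  set M := ⨆ i, ‖F i‖ * ‖G i‖ with hM
  by_contra hcon
  push_neg at hcon
  obtain ⟨i₀, hi₀⟩ := exists_eq_ciSup_of_finite (f := fun i => ‖F i‖ * ‖P (F i)‖)
  have hi₀L : ‖F i₀‖ * ‖P (F i₀)‖ = L := by rw [hi₀, hL]
  have hsne : s.Nonempty := ⟨i₀, by simp [hs, hp, hi₀L]⟩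
  have hMge : ∀ i, ‖F i‖ * ‖G i‖ ≤ M := fun i =>
    le_ciSup (f := fun i => ‖F i‖ * ‖G i‖) (Set.Finite.bddAbove (Set.finite_range _)) i
  have hM0 : 0 ≤ M := le_trans (by positivity) (hMge i₀)
  have hLpos : 0 < L := lt_of_le_of_lt hM0 hcon
  -- per-index strict inequality on s
  have hstrict : ∀ i ∈ s, ‖G i‖ * ‖P (F i)‖ < ‖P (F i)‖ ^ 2 := by
    intro i hi
    have hiL : ‖F i‖ * ‖P (F i)‖ = L := (Finset.mem_filter.mp hi).2
    have hFpos : 0 < ‖F i‖ := by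
      by_contra h
      push_neg at h
      have : ‖F i‖ = 0 := le_antisymm h (norm_nonneg _)
      rw [this, zero_mul] at hiL
      linarith
    have hPpos : 0 < ‖P (F i)‖ := by
      by_contra h
      push_neg at h
      have : ‖P (F i)‖ = 0 := le_antisymm h (norm_nonneg _)
      rw [this, mul_zero] at hiL
      linarith
    have hGi : ‖G i‖ < ‖P (F i)‖ := by
      have h1 : ‖F i‖ * ‖G i‖ < ‖F i‖ * ‖P (F i)‖ := lt_of_le_of_lt (hMge i) (hiL ▸ hcon)
      exact lt_of_mul_lt_mul_left h1 (le_of_lt hFpos)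
    calc ‖G i‖ * ‖P (F i)‖ < ‖P (F i)‖ * ‖P (F i)‖ :=
          mul_lt_mul_of_pos_right hGi hPpos
      _ = ‖P (F i)‖ ^ 2 := (sq _).symm
  -- the trace identity forces a contradiction
  have hid : ((∑ i ∈ s, ‖P (F i)‖ ^ 2 : ℝ) : ℂ) = ∑ i ∈ s, ⟪G i, P (F i)⟫ := by
    have h1 : ∑ i ∈ s, ⟪G i, P (F i)⟫ = ∑ i ∈ s, ⟪P (F i), P (F i)⟫ := by
      have h2 : ∑ i ∈ s, (⟪G i, P (F i)⟫ - ⟪P (F i), P (F i)⟫) = 0 := by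
        rw [← htr]
        exact Finset.sum_congr rfl fun i _ => by rw [inner_sub_left]
      rw [Finset.sum_sub_distrib] at h2
      exact sub_eq_zero.mp h2
    rw [h1]
    push_cast
    exact (Finset.sum_congr rfl fun i _ => by
      rw [inner_self_eq_norm_sq_to_K]; norm_cast).symm
  have hre : (∑ i ∈ s, ‖P (F i)‖ ^ 2 : ℝ) = ∑ i ∈ s, (⟪G i, P (F i)⟫ : ℂ).re := by
    have h := congrArg Complex.re hid
    rwa [Complex.ofReal_re, Complex.re_sum] at h
  have hle : (∑ i ∈ s, ‖P (F i)‖ ^ 2 : ℝ) < ∑ i ∈ s, ‖P (F i)‖ ^ 2 := by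
    calc (∑ i ∈ s, ‖P (F i)‖ ^ 2 : ℝ) = ∑ i ∈ s, (⟪G i, P (F i)⟫ : ℂ).re := hre
      _ ≤ ∑ i ∈ s, ‖G i‖ * ‖P (F i)‖ := by
          refine Finset.sum_le_sum fun i _ => ?_
          calc (⟪G i, P (F i)⟫ : ℂ).re ≤ ‖⟪G i, P (F i)⟫‖ := Complex.re_le_norm _
            _ = ‖(⟪G i, P (F i)⟫ : ℂ)‖ := rfl
            _ ≤ ‖G i‖ * ‖P (F i)‖ := norm_inner_le_norm _ _
      _ < ∑ i ∈ s, ‖P (F i)‖ ^ 2 := Finset.sum_lt_sum_of_nonempty hsne hstrict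
  exact lt_irrefl _ hle
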